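/- Let A be a self-adjoint operator in H, α ≠ 0 real, V ≥ 0 bounded self-adjoint, z ∈ ρ(A), and suppose -1/α is not an eigenvalue of the compact operator K(z) = V^{1/2}(A - zI)⁻¹V^{1/2} and K(z) + α⁻¹I is boundedly invertible. Then z ∈ ρ(A + αV) and (A + αV - zI)⁻¹ = (A - zI)⁻¹ - (A - zI)⁻¹ V^{1/2} [K(z) + α⁻¹ I]⁻¹ V^{1/2} (A - zI)⁻¹. -/
import Mathlib


variable {H : Type*} [NormedAddCommGroup H] [InnerProductSpace ℂ H] [CompleteSpace H]

open ContinuousLinearMap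

/-- `R` is the (bounded, everywhere defined) resolvent `(A - z I)⁻¹` of `A` at `z`. -/
def IsResolvent (A : H →ₗ.[ℂ] H) (z : ℂ) (R : H →L[ℂ] H) : Prop :=
  (∀ f : H, ∃ hf : R f ∈ A.domain, A ⟨R f, hf⟩ - z • R f = f) ∧
  ∀ x : A.domain, R (A x - z • (x : H)) = x

/-- Birman–Schwinger resolvent formula: let `A` be self-adjoint, `α ≠ 0`, `V ≥ 0` bounded
self-adjoint with square root `W = V^{1/2}`, `z ∈ ρ(A)`, and suppose `-1/α` is not an
eigenvalue of the compact operator `K(z) = W (A - z I)⁻¹ W` and `K(z) + α⁻¹ I` is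
boundedly invertible, with inverse `G`.  Then `z ∈ ρ(A + αV)` and
`(A + αV - z I)⁻¹ = (A - z I)⁻¹ - (A - z I)⁻¹ W [K(z) + α⁻¹ I]⁻¹ W (A - z I)⁻¹`. -/
theorem statement19 (A : H →ₗ.[ℂ] H) (hA : IsSelfAdjoint A)
    (α : ℝ) (hα : α ≠ 0)
    (V W : H →L[ℂ] H) (hV : V.IsPositive) (hW : W.IsPositive) (hWV : W ∘L W = V)
    (z : ℂ) (RA : H →L[ℂ] H) (hRA : IsResolvent A z RA)
    (hKcpt : IsCompactOperator ⇑(W ∘L RA ∘L W))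
    (hnoev : ∀ x : H, (W ∘L RA ∘L W) x = ((-(1 / α) : ℝ) : ℂ) • x → x = 0)
    (G : H →L[ℂ] H)
    (hG1 : (W ∘L RA ∘L W + ((α : ℂ))⁻¹ • ContinuousLinearMap.id ℂ H) ∘L G
        = ContinuousLinearMap.id ℂ H)
    (hG2 : G ∘L (W ∘L RA ∘L W + ((α : ℂ))⁻¹ • ContinuousLinearMap.id ℂ H)
        = ContinuousLinearMap.id ℂ H) :
    (∀ f : H, ∃ hf : (RA - RA ∘L W ∘L G ∘L W ∘L RA) f ∈ A.domain,
        A ⟨(RA - RA ∘L W ∘L G ∘L W ∘L RA) f, hf⟩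
            + (α : ℂ) • V ((RA - RA ∘L W ∘L G ∘L W ∘L RA) f)
            - z • (RA - RA ∘L W ∘L G ∘L W ∘L RA) f = f) ∧
      ∀ (x : H) (hx : x ∈ A.domain),
        (RA - RA ∘L W ∘L G ∘L W ∘L RA) (A ⟨x, hx⟩ + (α : ℂ) • V x - z • x) = x := by

  set c : ℂ := ((α : ℂ))⁻¹ with hc
  have hαc : (α : ℂ) * c = 1 := mul_inv_cancel₀ (by exact_mod_cast hα)
  have hKG : ∀ y : H, (W ∘L RA ∘L W) (G y) = y - c • G y := by
    intro y
    have h := congrArg (fun T : H →L[ℂ] H => T y) hG1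
    simp only [ContinuousLinearMap.comp_apply, ContinuousLinearMap.add_apply,
      ContinuousLinearMap.smul_apply, ContinuousLinearMap.id_apply] at h
    rw [eq_sub_iff_add_eq]
    exact h
  have hGK : ∀ y : H, G ((W ∘L RA ∘L W) y) = y - c • G y := by
    intro y
    have h := congrArg (fun T : H →L[ℂ] H => T y) hG2
    simp only [ContinuousLinearMap.comp_apply, ContinuousLinearMap.add_apply,
      ContinuousLinearMap.smul_apply, ContinuousLinearMap.id_apply, map_add, map_smul] at h
    rw [eq_sub_iff_add_eq]
    exact h
  constructor
  · intro f
    set u : H := f - W (G (W (RA f))) with hu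
    obtain ⟨hmem, heq⟩ := hRA.1 u
    have hS : (RA - RA ∘L W ∘L G ∘L W ∘L RA) f = RA u := by
      simp [hu, map_sub, ContinuousLinearMap.comp_apply, ContinuousLinearMap.sub_apply]
    refine ⟨hS ▸ hmem, ?_⟩
    have hsub : (⟨(RA - RA ∘L W ∘L G ∘L W ∘L RA) f, hS ▸ hmem⟩ : A.domain) = ⟨RA u, hmem⟩ :=
      Subtype.ext hS
    rw [hsub, hS]
    have hA' : A ⟨RA u, hmem⟩ = u + z • RA u := eq_add_of_sub_eq heq
    have hWRAu : W (RA u) = c • G (W (RA f)) := by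
      have h1 : W (RA u) = W (RA f) - (W ∘L RA ∘L W) (G (W (RA f))) := by
        simp [hu, map_sub, ContinuousLinearMap.comp_apply]
      rw [h1, hKG]
      abel
    have hV' : (α : ℂ) • V (RA u) = W (G (W (RA f))) := by
      rw [← hWV]
      simp only [ContinuousLinearMap.comp_apply, hWRAu, map_smul, smul_smul, hαc, one_smul]
    rw [hA', hV']
    simp only [hu]
    abel
  · intro x hx
    have h2 := hRA.2 ⟨x, hx⟩
    have hRAf : RA (A ⟨x, hx⟩ + (α : ℂ) • V x - z • x) = x + (α : ℂ) • RA (V x) := by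
      have hfe : A ⟨x, hx⟩ + (α : ℂ) • V x - z • x
          = (A ⟨x, hx⟩ - z • ((⟨x, hx⟩ : A.domain) : H)) + (α : ℂ) • V x := by
        simp only []; abel
      rw [hfe, map_add, map_smul, h2]
    have hWRAf : W (RA (A ⟨x, hx⟩ + (α : ℂ) • V x - z • x))
        = W x + (α : ℂ) • (W ∘L RA ∘L W) (W x) := by
      rw [hRAf, map_add, map_smul]
      congr 2
      rw [← hWV]
      simp [ContinuousLinearMap.comp_apply]
    have hGW : G (W (RA (A ⟨x, hx⟩ + (α : ℂ) • V x - z • x))) = (α : ℂ) • W x := by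
      rw [hWRAf, map_add, map_smul, hGK (W x), smul_sub, smul_smul, hαc, one_smul]
      abel
    have hexp : (RA - RA ∘L W ∘L G ∘L W ∘L RA) (A ⟨x, hx⟩ + (α : ℂ) • V x - z • x)
        = RA (A ⟨x, hx⟩ + (α : ℂ) • V x - z • x)
          - RA (W (G (W (RA (A ⟨x, hx⟩ + (α : ℂ) • V x - z • x))))) := by
      simp [ContinuousLinearMap.comp_apply, ContinuousLinearMap.sub_apply]
    rw [hexp, hGW, map_smul, map_smul, hRAf]
    have hWWx : W (W x) = V x := by rw [← hWV]; rfl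
    rw [hWWx]
    abel
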